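/- Let G be a compact metrizable abelian topological group (written multiplicatively) with identity element 1, equipped with a translation-invariant metric d inducing its topology. Let r > 0 and let P ⊆ G be a finite set with d(x, y) ≥ 2r for all distinct x, y ∈ P. Let S be a finite set of continuous characters χ : G → ℂ (continuous homomorphisms into the unit circle) containing the trivial character 𝟙, let (a_χ)_{χ ∈ S} be nonnegative real coefficients with a_𝟙 > 0, and set f(g) := Re( ∑_{χ ∈ S} a_χ χ(g) ). If f(g) ≤ 0 whenever d(g, 1) ≥ 2r, then #P ≤ f(1) / a_𝟙. -/

import Mathlib

open MeasureTheory Metric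

/-- (Delsarte-type bound.)  Let `G` be a compact metrizable abelian group
with a translation-invariant metric, `r > 0` and `P ⊆ G` a finite `2r`-separated set.  Let
`S` be a finite set of continuous characters of `G` containing the trivial one, with
nonnegative coefficients `a_χ` and `a_𝟙 > 0`, and `f(g) = Re(∑_χ a_χ χ(g))`.  If `f(g) ≤ 0`
whenever `d(g, 1) ≥ 2r`, then `#P ≤ f(1)/a_𝟙`. -/
theorem statement14
    {G ι : Type*} [CommGroup G] [MetricSpace G] [CompactSpace G] [IsTopologicalGroup G]
    (hinv : ∀ g x y : G, dist (g * x) (g * y) = dist x y)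
    (r : ℝ) (hr : 0 < r)
    (P : Finset G) (hsep : ∀ x ∈ P, ∀ y ∈ P, x ≠ y → 2 * r ≤ dist x y)
    (S : Finset ι) (χ : ι → G → ℂ)
    (hχ_cont : ∀ i ∈ S, Continuous (χ i))
    (hχ_hom : ∀ i ∈ S, ∀ x y : G, χ i (x * y) = χ i x * χ i y)
    (hχ_unit : ∀ i ∈ S, ∀ x : G, ‖χ i x‖ = 1)
    (i₀ : ι) (hi₀ : i₀ ∈ S) (hχtriv : ∀ x : G, χ i₀ x = 1)
    (a : ι → ℝ) (ha : ∀ i ∈ S, 0 ≤ a i) (ha₀ : 0 < a i₀)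
    (f : G → ℝ) (hf : ∀ g : G, f g = (∑ i ∈ S, (a i : ℂ) * χ i g).re)
    (hneg : ∀ g : G, 2 * r ≤ dist g 1 → f g ≤ 0) :
    (P.card : ℝ) ≤ f 1 / a i₀ := by
  classical
  have hχ1 : ∀ i ∈ S, χ i 1 = 1 := by
    intro i hi
    have hn : χ i 1 ≠ 0 := by
      intro h0
      have := hχ_unit i hi 1
      rw [h0] at this; simp at this
    have h := hχ_hom i hi 1 1
    rw [mul_one] at h
    have : χ i 1 * 1 = χ i 1 * χ i 1 := by rw [mul_one, ← h]
    exact (mul_left_cancel₀ hn this).symm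
  have hconj : ∀ i ∈ S, ∀ x : G, χ i x⁻¹ = starRingEnd ℂ (χ i x) := by
    intro i hi x
    have hn : χ i x ≠ 0 := by
      intro h0
      have := hχ_unit i hi x
      rw [h0] at this; simp at this
    have h1 : χ i x⁻¹ * χ i x = 1 := by
      rw [← hχ_hom i hi, inv_mul_cancel, hχ1 i hi]
    have h2 : starRingEnd ℂ (χ i x) * χ i x = 1 := by
      rw [mul_comm, Complex.mul_conj']
      norm_cast
      rw [hχ_unit i hi x]; norm_num
    exact mul_right_cancel₀ hn (h1.trans h2.symm)
  set s : ι → ℂ := fun i => ∑ x ∈ P, χ i x with hs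
  have key : ∀ i ∈ S, ∑ x ∈ P, ∑ y ∈ P, χ i (x⁻¹ * y) = (‖s i‖ : ℂ) ^ 2 := by
    intro i hi
    calc ∑ x ∈ P, ∑ y ∈ P, χ i (x⁻¹ * y)
        = ∑ x ∈ P, ∑ y ∈ P, starRingEnd ℂ (χ i x) * χ i y :=
          Finset.sum_congr rfl fun x _ => Finset.sum_congr rfl fun y _ => by
            rw [hχ_hom i hi, hconj i hi]
      _ = starRingEnd ℂ (s i) * s i := by
          rw [hs]; rw [map_sum, Finset.sum_mul]
          exact Finset.sum_congr rfl fun x _ => (Finset.mul_sum _ _ _).symm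
      _ = (‖s i‖ : ℂ) ^ 2 := by
          rw [mul_comm, Complex.mul_conj']
  have hT : ∑ x ∈ P, ∑ y ∈ P, f (x⁻¹ * y) = ∑ i ∈ S, a i * ‖s i‖ ^ 2 := by
    have hC : ∑ x ∈ P, ∑ y ∈ P, ∑ i ∈ S, (a i : ℂ) * χ i (x⁻¹ * y)
        = ∑ i ∈ S, (a i : ℂ) * (‖s i‖ : ℂ) ^ 2 := by
      calc ∑ x ∈ P, ∑ y ∈ P, ∑ i ∈ S, (a i : ℂ) * χ i (x⁻¹ * y)
          = ∑ x ∈ P, ∑ i ∈ S, ∑ y ∈ P, (a i : ℂ) * χ i (x⁻¹ * y) :=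
            Finset.sum_congr rfl fun x _ => Finset.sum_comm
        _ = ∑ i ∈ S, ∑ x ∈ P, ∑ y ∈ P, (a i : ℂ) * χ i (x⁻¹ * y) := Finset.sum_comm
        _ = ∑ i ∈ S, (a i : ℂ) * (‖s i‖ : ℂ) ^ 2 := ?_
      refine Finset.sum_congr rfl fun i hi => ?_
      rw [← key i hi]
      rw [Finset.mul_sum]
      exact Finset.sum_congr rfl fun x _ => (Finset.mul_sum _ _ _).symm
    calc ∑ x ∈ P, ∑ y ∈ P, f (x⁻¹ * y)
        = (∑ x ∈ P, ∑ y ∈ P, ∑ i ∈ S, (a i : ℂ) * χ i (x⁻¹ * y)).re := by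
          simp only [hf, Complex.re_sum]
      _ = (∑ i ∈ S, (a i : ℂ) * (‖s i‖ : ℂ) ^ 2).re := by rw [hC]
      _ = ∑ i ∈ S, a i * ‖s i‖ ^ 2 := by
          rw [Complex.re_sum]
          refine Finset.sum_congr rfl fun i _ => ?_
          norm_cast
  have hlow : a i₀ * (P.card : ℝ) ^ 2 ≤ ∑ x ∈ P, ∑ y ∈ P, f (x⁻¹ * y) := by
    rw [hT]
    have hs0 : s i₀ = (P.card : ℂ) := by
      rw [hs]; simp [hχtriv]
    have h1 : a i₀ * ‖s i₀‖ ^ 2 = a i₀ * (P.card : ℝ) ^ 2 := by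
      rw [hs0]; norm_num
    rw [← h1]
    exact Finset.single_le_sum (f := fun i => a i * ‖s i‖ ^ 2)
      (fun i hi => mul_nonneg (ha i hi) (sq_nonneg _)) hi₀
  have hub : ∑ x ∈ P, ∑ y ∈ P, f (x⁻¹ * y) ≤ (P.card : ℝ) * f 1 := by
    have h1 : ∀ x ∈ P, ∑ y ∈ P, f (x⁻¹ * y) ≤ f 1 := by
      intro x hx
      rw [← Finset.add_sum_erase _ _ hx, inv_mul_cancel]
      have h2 : ∑ y ∈ P.erase x, f (x⁻¹ * y) ≤ 0 := by
        refine Finset.sum_nonpos fun y hy => ?_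
        apply hneg
        have hyx : y ≠ x := Finset.ne_of_mem_erase hy
        calc 2 * r ≤ dist x y := hsep x hx y (Finset.mem_of_mem_erase hy) hyx.symm
          _ = dist (x⁻¹ * x) (x⁻¹ * y) := (hinv x⁻¹ x y).symm
          _ = dist (x⁻¹ * y) 1 := by rw [inv_mul_cancel, dist_comm]
      linarith
    calc ∑ x ∈ P, ∑ y ∈ P, f (x⁻¹ * y) ≤ ∑ _x ∈ P, f 1 := Finset.sum_le_sum h1
      _ = (P.card : ℝ) * f 1 := by rw [Finset.sum_const, nsmul_eq_mul]
  rcases Nat.eq_zero_or_pos P.card with h0 | hpos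
  · rw [h0]
    have hf1 : f 1 = ∑ i ∈ S, a i := by
      rw [hf, Complex.re_sum]
      refine Finset.sum_congr rfl fun i hi => ?_
      rw [hχ1 i hi]; simp
    have : 0 ≤ f 1 := hf1 ▸ Finset.sum_nonneg ha
    push_cast
    positivity
  · have hcd : (0 : ℝ) < P.card := by exact_mod_cast hpos
    rw [le_div_iff₀ ha₀]
    have := hlow.trans hub
    nlinarith
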